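/- arXiv:1504.00506 — 2 statements merged into one kernel-verified Lean document; each statement's English description precedes it below -/
import Mathlib

section
/- For any T ∈ ℝ with T ≥ 1, the function g(ξ) = ∫_{ℝ³} χ_{||η|−T|≤1}(η) ⟨ξ−η⟩^{−2−ε} dη is bounded on ℝ³ uniformly in T, i.e. sup_{ξ∈ℝ³} g(ξ) ≤ C_ε < ∞ with C_ε independent of T. -/
open MeasureTheory

noncomputable section

abbrev E3 := EuclideanSpace ℝ (Fin 3)

/-- the Japanese bracket `⟨ξ⟩ = (1+|ξ|²)^{1/2}` on `ℝ³` -/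
def jb3 (ξ : E3) : ℝ := Real.sqrt (1 + ‖ξ‖ ^ 2)

open Set
open scoped ENNReal

lemma sqrt_diff_le_five {T c : ℝ} (hT : 1 ≤ T) (hc : 0 ≤ c) (hcT : c ≤ T^2/4) :
    Real.sqrt ((T+1)^2 - c) ≤ Real.sqrt (max 0 ((T-1)^2 - c)) + 5 := by
  rcases le_or_gt T 4 with h4 | h4
  · calc Real.sqrt ((T+1)^2 - c) ≤ Real.sqrt ((T+1)^2) := by
          apply Real.sqrt_le_sqrt; linarith
      _ = T + 1 := Real.sqrt_sq (by linarith)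
      _ ≤ 0 + 5 := by linarith
      _ ≤ _ + 5 := by gcongr; exact Real.sqrt_nonneg _
  · have hu : max 0 ((T-1)^2 - c) = (T-1)^2 - c := max_eq_right (by nlinarith)
    rw [hu]
    have h1 : (2*T/5)^2 ≤ (T-1)^2 - c := by nlinarith
    have h2 : 2*T/5 ≤ Real.sqrt ((T-1)^2 - c) := by
      have := Real.sqrt_le_sqrt h1
      rwa [Real.sqrt_sq (by positivity)] at this
    have hs := Real.sq_sqrt (show (0:ℝ) ≤ (T-1)^2 - c by nlinarith)
    have h3 : (T+1)^2 - c ≤ (Real.sqrt ((T-1)^2-c) + 5)^2 := by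
      nlinarith [Real.sqrt_nonneg ((T-1)^2 - c)]
    calc Real.sqrt ((T+1)^2 - c) ≤ Real.sqrt ((Real.sqrt ((T-1)^2-c) + 5)^2) :=
          Real.sqrt_le_sqrt h3
      _ = _ := Real.sqrt_sq (by positivity)
lemma fiber_vol_le {T c : ℝ} (hT : 1 ≤ T) (hc : 0 ≤ c) (hcT : c ≤ T^2/4) :
    volume {t : ℝ | (T-1)^2 ≤ t^2 + c ∧ t^2 + c ≤ (T+1)^2} ≤ ENNReal.ofReal 10 := by
  set u : ℝ := max 0 ((T-1)^2 - c) with hu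
  set v : ℝ := (T+1)^2 - c with hv
  have hv0 : 0 ≤ v := by nlinarith
  have hsub : {t : ℝ | (T-1)^2 ≤ t^2 + c ∧ t^2 + c ≤ (T+1)^2} ⊆
      Icc (-Real.sqrt v) (-Real.sqrt u) ∪ Icc (Real.sqrt u) (Real.sqrt v) := by
    rintro t ⟨h1, h2⟩
    have ht2u : u ≤ t^2 := by
      apply max_le (sq_nonneg t); linarith
    have ht2v : t^2 ≤ v := by simp only [hv]; linarith
    have habs1 : Real.sqrt u ≤ |t| := by
      have := Real.sqrt_le_sqrt ht2u
      rwa [Real.sqrt_sq_eq_abs] at this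
    have habs2 : |t| ≤ Real.sqrt v := by
      have := Real.sqrt_le_sqrt ht2v
      rwa [Real.sqrt_sq_eq_abs] at this
    rcases le_or_gt 0 t with ht | ht
    · right
      rw [abs_of_nonneg ht] at habs1 habs2
      exact ⟨habs1, habs2⟩
    · left
      rw [abs_of_neg ht] at habs1 habs2
      constructor <;> linarith
  have h5 : Real.sqrt v - Real.sqrt u ≤ 5 := by
    have := sqrt_diff_le_five hT hc hcT
    rw [← hu, ← hv] at this; linarith
  calc volume {t : ℝ | (T-1)^2 ≤ t^2 + c ∧ t^2 + c ≤ (T+1)^2}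
      ≤ volume (Icc (-Real.sqrt v) (-Real.sqrt u) ∪ Icc (Real.sqrt u) (Real.sqrt v)) :=
        measure_mono hsub
    _ ≤ volume (Icc (-Real.sqrt v) (-Real.sqrt u)) + volume (Icc (Real.sqrt u) (Real.sqrt v)) :=
        measure_union_le _ _
    _ ≤ ENNReal.ofReal 5 + ENNReal.ofReal 5 := by
        rw [Real.volume_Icc, Real.volume_Icc]
        gcongr <;> linarith
    _ = ENNReal.ofReal 10 := by rw [← ENNReal.ofReal_add] <;> norm_num
lemma pi_cylinder_bound {T r : ℝ} (hT : 1 ≤ T) (hr : 0 < r) (hrT : r ≤ T/2) :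
    volume {y : Fin 3 → ℝ |
        ((T-1)^2 ≤ (y 0)^2 + ((y 1)^2 + (y 2)^2) ∧
          (y 0)^2 + ((y 1)^2 + (y 2)^2) ≤ (T+1)^2) ∧ (y 1)^2 + (y 2)^2 ≤ r^2}
      ≤ ENNReal.ofReal (40 * r^2) := by
  classical
  set A : Set (ℝ × (Fin 2 → ℝ)) := {p |
    ((T-1)^2 ≤ p.1^2 + ((p.2 0)^2 + (p.2 1)^2) ∧
      p.1^2 + ((p.2 0)^2 + (p.2 1)^2) ≤ (T+1)^2) ∧ (p.2 0)^2 + (p.2 1)^2 ≤ r^2} with hA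
  have hm1 : Measurable fun p : ℝ × (Fin 2 → ℝ) => p.1^2 + ((p.2 0)^2 + (p.2 1)^2) := by
    fun_prop
  have hm2 : Measurable fun p : ℝ × (Fin 2 → ℝ) => (p.2 0)^2 + (p.2 1)^2 := by fun_prop
  have hAmeas : MeasurableSet A :=
    (((measurableSet_le measurable_const hm1).inter
      (measurableSet_le hm1 measurable_const)).inter
      (measurableSet_le hm2 measurable_const))
  have hpre : {y : Fin 3 → ℝ |
        ((T-1)^2 ≤ (y 0)^2 + ((y 1)^2 + (y 2)^2) ∧
          (y 0)^2 + ((y 1)^2 + (y 2)^2) ≤ (T+1)^2) ∧ (y 1)^2 + (y 2)^2 ≤ r^2}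
      = (MeasurableEquiv.piFinSuccAbove (fun _ : Fin 3 => ℝ) 0) ⁻¹' A := by
    ext y
    simp [A, MeasurableEquiv.piFinSuccAbove, Fin.succAbove, Fin.tail]
  rw [hpre,
    (volume_preserving_piFinSuccAbove (fun _ : Fin 3 => ℝ) 0).measure_preimage
      hAmeas.nullMeasurableSet]
  set D : Set (Fin 2 → ℝ) := {z | (z 0)^2 + (z 1)^2 ≤ r^2} with hD
  have hDmeas : MeasurableSet D := measurableSet_le (by fun_prop) measurable_const
  have hswap : (volume : Measure (ℝ × (Fin 2 → ℝ))) A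
      = (volume : Measure ((Fin 2 → ℝ) × ℝ)) (Prod.swap ⁻¹' A) := by
    rw [Measure.volume_eq_prod, Measure.volume_eq_prod]
    exact (Measure.measurePreserving_swap.measure_preimage hAmeas.nullMeasurableSet).symm
  rw [hswap, Measure.volume_eq_prod, Measure.prod_apply (hAmeas.preimage measurable_swap)]
  have hfiber : ∀ z : Fin 2 → ℝ,
      volume (Prod.mk z ⁻¹' (Prod.swap ⁻¹' A)) ≤ D.indicator (fun _ => ENNReal.ofReal 10) z := by
    intro z
    by_cases hz : z ∈ D
    · rw [Set.indicator_of_mem hz]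
      have hc0 : (0:ℝ) ≤ (z 0)^2 + (z 1)^2 := by positivity
      have hcT : (z 0)^2 + (z 1)^2 ≤ T^2/4 := by
        have : r^2 ≤ (T/2)^2 := by nlinarith
        have hzr : (z 0)^2 + (z 1)^2 ≤ r^2 := hz
        nlinarith
      refine le_trans (measure_mono ?_) (fiber_vol_le hT hc0 hcT)
      rintro t ⟨⟨h1, h2⟩, _⟩
      exact ⟨h1, h2⟩
    · have : Prod.mk z ⁻¹' (Prod.swap ⁻¹' A) = ∅ := by
        ext t
        simp only [Set.mem_preimage, Set.mem_empty_iff_false, iff_false]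
        rintro ⟨_, hc⟩
        exact hz hc
      rw [this, Set.indicator_of_notMem hz, measure_empty]
  calc ∫⁻ z, volume (Prod.mk z ⁻¹' (Prod.swap ⁻¹' A))
      ≤ ∫⁻ z, D.indicator (fun _ => ENNReal.ofReal 10) z := lintegral_mono hfiber
    _ = ENNReal.ofReal 10 * volume D := by
        rw [lintegral_indicator hDmeas]; simp
    _ ≤ ENNReal.ofReal 10 * ENNReal.ofReal ((2*r)^2) := by
        gcongr
        have hsub : D ⊆ Set.pi Set.univ (fun _ : Fin 2 => Icc (-r) r) := by
          intro z hz i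
          have hz' : (z 0)^2 + (z 1)^2 ≤ r^2 := hz
          have hzr : (z i)^2 ≤ r^2 := by
            match i with
            | 0 => nlinarith [sq_nonneg (z 1)]
            | 1 => nlinarith [sq_nonneg (z 0)]
          have habs : |z i| ≤ r := by
            have := Real.sqrt_le_sqrt hzr
            rwa [Real.sqrt_sq_eq_abs, Real.sqrt_sq hr.le] at this
          simp only [Set.mem_univ, forall_true_left]
          exact ⟨neg_le_of_abs_le habs, le_of_abs_le habs⟩
        refine le_trans (measure_mono hsub) ?_
        rw [volume_pi_pi]
        simp only [Real.volume_Icc]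
        rw [Finset.prod_const, ENNReal.ofReal_pow (by positivity)]
        have : r - -r = 2*r := by ring
        rw [this]
        simp
    _ = ENNReal.ofReal (40 * r^2) := by
        rw [← ENNReal.ofReal_mul (by norm_num)]
        ring_nf
lemma e3_norm_sq (y : E3) : ‖y‖^2 = (y 0)^2 + ((y 1)^2 + (y 2)^2) := by
  rw [EuclideanSpace.norm_eq, Real.sq_sqrt (by positivity)]
  simp [Fin.sum_univ_three, Real.norm_eq_abs, sq_abs]
  ring
lemma e3_coord_abs_le_norm (y : E3) (i : Fin 3) : |y i| ≤ ‖y‖ := by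
  have h : (y i)^2 ≤ ‖y‖^2 := by
    rw [e3_norm_sq]
    match i with
    | 0 => nlinarith [sq_nonneg (y 1), sq_nonneg (y 2)]
    | 1 => nlinarith [sq_nonneg (y 0), sq_nonneg (y 2)]
    | 2 => nlinarith [sq_nonneg (y 0), sq_nonneg (y 1)]
  have := Real.sqrt_le_sqrt h
  rwa [Real.sqrt_sq_eq_abs, Real.sqrt_sq (norm_nonneg y)] at this
lemma unit_ball_vol_le : volume (Metric.ball (0:E3) 1) ≤ ENNReal.ofReal 8 := by
  have hsub : Metric.ball (0:E3) 1 ⊆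
      (MeasurableEquiv.toLp 2 (Fin 3 → ℝ)).symm ⁻¹'
        (Set.pi Set.univ fun _ : Fin 3 => Icc (-1:ℝ) 1) := by
    intro y hy
    rw [Metric.mem_ball, dist_zero_right] at hy
    intro i _
    have habs : |y i| ≤ 1 := (e3_coord_abs_le_norm y i).trans hy.le
    exact ⟨neg_le_of_abs_le habs, le_of_abs_le habs⟩
  refine le_trans (measure_mono hsub) ?_
  rw [(EuclideanSpace.volume_preserving_symm_measurableEquiv_toLp (Fin 3)).measure_preimage
    (MeasurableSet.univ_pi (fun _ => measurableSet_Icc)).nullMeasurableSet]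
  rw [volume_pi_pi]
  simp only [Real.volume_Icc]
  rw [Finset.prod_const]
  norm_num
lemma annulus_vol {T : ℝ} (hT : 1 ≤ T) :
    volume {η : E3 | |‖η‖ - T| ≤ 1} ≤ ENNReal.ofReal (64 * T^2) := by
  have h1 : {η : E3 | |‖η‖ - T| ≤ 1} ⊆
      Metric.closedBall 0 (T+1) \ Metric.ball 0 (T-1) := by
    intro η hη
    have hη' : |‖η‖ - T| ≤ 1 := hη
    have habs := abs_le.mp hη'
    constructor
    · rw [Metric.mem_closedBall, dist_zero_right]; linarith [habs.2]
    · rw [Metric.mem_ball, dist_zero_right]; push_neg; linarith [habs.1]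
  refine le_trans (measure_mono h1) ?_
  rw [measure_diff (Metric.ball_subset_closedBall.trans
      (Metric.closedBall_subset_closedBall (by linarith)))
    measurableSet_ball.nullMeasurableSet measure_ball_lt_top.ne]
  rw [Measure.addHaar_closedBall volume 0 (show (0:ℝ) ≤ T+1 by linarith),
      Measure.addHaar_ball volume 0 (show (0:ℝ) ≤ T-1 by linarith)]
  rw [finrank_euclideanSpace_fin]
  set κ := volume (Metric.ball (0:E3) 1) with hκdef
  have key : ENNReal.ofReal ((T+1)^3) * κ
      ≤ ENNReal.ofReal ((T-1)^3) * κ + ENNReal.ofReal (64 * T^2) := by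
    calc ENNReal.ofReal ((T+1)^3) * κ
        ≤ (ENNReal.ofReal ((T-1)^3) + ENNReal.ofReal (8*T^2)) * κ := by
          gcongr
          rw [← ENNReal.ofReal_add (pow_nonneg (by linarith) 3) (by positivity)]
          exact ENNReal.ofReal_le_ofReal (by nlinarith)
      _ = ENNReal.ofReal ((T-1)^3) * κ + ENNReal.ofReal (8*T^2) * κ := by rw [add_mul]
      _ ≤ ENNReal.ofReal ((T-1)^3) * κ + ENNReal.ofReal (8*T^2) * ENNReal.ofReal 8 := by
          gcongr
          exact unit_ball_vol_le
      _ = ENNReal.ofReal ((T-1)^3) * κ + ENNReal.ofReal (64 * T^2) := by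
          rw [← ENNReal.ofReal_mul (by nlinarith)]
          congr 2; ring
  exact tsub_le_iff_left.mpr key
lemma annulus_ball_bound {T r : ℝ} (hT : 1 ≤ T) (hr : 0 < r) (ξ : E3) :
    volume ({η : E3 | |‖η‖ - T| ≤ 1} ∩ Metric.closedBall ξ r)
      ≤ ENNReal.ofReal (256 * r^2) := by
  rcases le_or_gt r (T/2) with hrT | hrT
  · obtain ⟨u, c, hu, hξ⟩ : ∃ (u : E3) (c : ℝ), ‖u‖ = 1 ∧ ξ = c • u := by
      rcases eq_or_ne ξ 0 with h0 | h0
      · exact ⟨EuclideanSpace.single 0 1, 0, by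
          simp [EuclideanSpace.norm_single], by simp [h0]⟩
      · refine ⟨‖ξ‖⁻¹ • ξ, ‖ξ‖, ?_, ?_⟩
        · rw [norm_smul, norm_inv, norm_norm, inv_mul_cancel₀ (norm_ne_zero_iff.mpr h0)]
        · rw [smul_smul, mul_inv_cancel₀ (norm_ne_zero_iff.mpr h0), one_smul]
    have card : Module.finrank ℝ E3 = Fintype.card (Fin 3) := by
      simp [finrank_euclideanSpace_fin]
    have horth : Orthonormal ℝ (({0} : Set (Fin 3)).restrict (fun _ : Fin 3 => u)) := by
      constructor
      · intro i; exact hu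
      · intro i j hij
        refine absurd (Subtype.ext ?_) hij
        have hi := i.2; have hj := j.2
        simp only [Set.mem_singleton_iff] at hi hj
        rw [hi, hj]
    obtain ⟨b, hb⟩ := horth.exists_orthonormalBasis_extension_of_card_eq card
    have hb0 : b 0 = u := hb 0 rfl
    set Φ : E3 → (Fin 3 → ℝ) := fun η => (MeasurableEquiv.toLp 2 (Fin 3 → ℝ)).symm (b.repr η)
      with hΦ
    have hΦmp : MeasurePreserving Φ volume volume :=
      (EuclideanSpace.volume_preserving_symm_measurableEquiv_toLp (Fin 3)).comp b.measurePreserving_repr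
    set P : Set (Fin 3 → ℝ) := {y |
        ((T-1)^2 ≤ (y 0)^2 + ((y 1)^2 + (y 2)^2) ∧
          (y 0)^2 + ((y 1)^2 + (y 2)^2) ≤ (T+1)^2) ∧ (y 1)^2 + (y 2)^2 ≤ r^2} with hP
    have hPmeas : MeasurableSet P := by
      have hm1 : Measurable fun y : Fin 3 → ℝ => (y 0)^2 + ((y 1)^2 + (y 2)^2) := by fun_prop
      have hm2 : Measurable fun y : Fin 3 → ℝ => (y 1)^2 + (y 2)^2 := by fun_prop
      exact ((measurableSet_le measurable_const hm1).inter
        (measurableSet_le hm1 measurable_const)).inter (measurableSet_le hm2 measurable_const)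
    have hsub : {η : E3 | |‖η‖ - T| ≤ 1} ∩ Metric.closedBall ξ r ⊆ Φ ⁻¹' P := by
      rintro η ⟨hη1, hη2⟩
      have hη1' : |‖η‖ - T| ≤ 1 := hη1
      have habs := abs_le.mp hη1'
      have hnorm1 : T - 1 ≤ ‖η‖ := by linarith [habs.1]
      have hnorm2 : ‖η‖ ≤ T + 1 := by linarith [habs.2]
      have hyr : ∀ i : Fin 3, Φ η i = b.repr η i := fun i => rfl
      have hsum : (Φ η 0)^2 + ((Φ η 1)^2 + (Φ η 2)^2) = ‖η‖^2 := by
        rw [hyr 0, hyr 1, hyr 2, ← e3_norm_sq (b.repr η), LinearIsometryEquiv.norm_map]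
      have hy0 : Φ η 0 = (inner ℝ u η : ℝ) := by
        rw [hyr 0, b.repr_apply_apply, hb0]
      refine ⟨⟨?_, ?_⟩, ?_⟩
      · rw [Set.mem_setOf_eq] at *
        rw [hsum]; nlinarith [norm_nonneg η]
      · rw [hsum]; nlinarith [norm_nonneg η]
      · -- cylinder condition
        have hball : ‖η - ξ‖ ≤ r := by
          rw [← dist_eq_norm]; exact Metric.mem_closedBall.mp hη2
        have hball2 : ‖η - ξ‖^2 ≤ r^2 := by nlinarith [norm_nonneg (η - ξ)]
        have hexp : ‖η - ξ‖^2 = ‖η‖^2 - 2*(c * (inner ℝ u η : ℝ)) + c^2 := by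
          rw [norm_sub_sq_real, hξ, real_inner_smul_right, norm_smul, mul_pow,
            Real.norm_eq_abs, sq_abs, hu, real_inner_comm η u]
          ring
        have : (Φ η 1)^2 + (Φ η 2)^2 = ‖η‖^2 - (Φ η 0)^2 := by linarith [hsum]
        rw [this, hy0]
        nlinarith [sq_nonneg ((inner ℝ u η : ℝ) - c)]
    calc volume ({η : E3 | |‖η‖ - T| ≤ 1} ∩ Metric.closedBall ξ r)
        ≤ volume (Φ ⁻¹' P) := measure_mono hsub
      _ = volume P := hΦmp.measure_preimage hPmeas.nullMeasurableSet
      _ ≤ ENNReal.ofReal (40 * r^2) := pi_cylinder_bound hT hr hrT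
      _ ≤ ENNReal.ofReal (256 * r^2) := ENNReal.ofReal_le_ofReal (by nlinarith)
  · refine le_trans (measure_mono Set.inter_subset_left)
      (le_trans (annulus_vol hT) (ENNReal.ofReal_le_ofReal ?_))
    nlinarith

/-- The convolution of the indicator of the annulus `{η : ||η|−T| ≤ 1}` with
`⟨·⟩^{−2−ε}` is bounded on `ℝ³` uniformly in `T ≥ 1`. -/
theorem annulus_convolution_bound (ε : ℝ) (hε : 0 < ε) :
    ∃ C : ℝ, 0 < C ∧ ∀ T : ℝ, 1 ≤ T → ∀ ξ : E3,
      ∫⁻ η : E3, Set.indicator {η : E3 | |‖η‖ - T| ≤ 1}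
          (fun η => ENNReal.ofReal (jb3 (ξ - η) ^ (-(2:ℝ) - ε))) η
        ≤ ENNReal.ofReal C := by

  have h2ε : (0:ℝ) < 2 + ε := by linarith
  set β : ℝ := 2 / (2 + ε) with hβ
  have hβ1 : β < 1 := by rw [hβ, div_lt_one h2ε]; linarith
  have hβ0 : 0 < β := by positivity
  refine ⟨256 * ((2 + ε) / ε), by positivity, ?_⟩
  intro T hT ξ
  have hScont : Continuous fun η : E3 => |‖η‖ - T| := (continuous_norm.sub continuous_const).abs
  have hS : MeasurableSet {η : E3 | |‖η‖ - T| ≤ 1} :=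
    measurableSet_le hScont.measurable measurable_const
  rw [lintegral_indicator hS]
  set f : E3 → ℝ := fun η => jb3 (ξ - η) ^ (-(2:ℝ) - ε) with hf
  have hjb1 : ∀ x : E3, 1 ≤ jb3 x := by
    intro x
    have h1 : Real.sqrt 1 ≤ Real.sqrt (1 + ‖x‖^2) :=
      Real.sqrt_le_sqrt (by nlinarith [sq_nonneg ‖x‖])
    rw [Real.sqrt_one] at h1
    simpa [jb3] using h1
  have hjbnorm : ∀ x : E3, ‖x‖ ≤ jb3 x := by
    intro x
    have h1 : Real.sqrt (‖x‖^2) ≤ Real.sqrt (1 + ‖x‖^2) := Real.sqrt_le_sqrt (by linarith)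
    rw [Real.sqrt_sq (norm_nonneg x)] at h1
    simpa [jb3] using h1
  have hfnn : ∀ η, 0 ≤ f η := fun η =>
    Real.rpow_nonneg (le_trans zero_le_one (hjb1 _)) _
  have hfm : AEMeasurable f (volume.restrict {η : E3 | |‖η‖ - T| ≤ 1}) := by
    apply Continuous.aemeasurable
    apply Continuous.rpow_const
    · exact Real.continuous_sqrt.comp (by fun_prop)
    · intro x
      left
      have := hjb1 (ξ - x)
      rw [jb3] at this ⊢
      intro h; rw [h] at this; linarith
  rw [lintegral_eq_lintegral_meas_lt _ (Filter.Eventually.of_forall hfnn) hfm]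
  have key : ∀ t ∈ Ioi (0:ℝ),
      (volume.restrict {η : E3 | |‖η‖ - T| ≤ 1}) {a | t < f a}
        ≤ (Ioc (0:ℝ) 1).indicator (fun t => ENNReal.ofReal (256 * t ^ (-β))) t := by
    intro t ht
    have ht0 : (0:ℝ) < t := ht
    rw [Measure.restrict_apply' hS]
    rcases le_or_gt t 1 with ht1 | ht1
    · have htm : t ∈ Ioc (0:ℝ) 1 := ⟨ht0, ht1⟩
      rw [Set.indicator_of_mem htm]
      set r : ℝ := t ^ (-(1/(2+ε))) with hrdef
      have hrpos : 0 < r := Real.rpow_pos_of_pos ht0 _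
      have hsub2 : {a : E3 | t < f a} ∩ {η : E3 | |‖η‖ - T| ≤ 1}
          ⊆ {η : E3 | |‖η‖ - T| ≤ 1} ∩ Metric.closedBall ξ r := by
        rintro a ⟨ha1, ha2⟩
        refine ⟨ha2, ?_⟩
        have ha1' : t < f a := ha1
        have hJ1 : 1 ≤ jb3 (ξ - a) := hjb1 _
        have hJ0 : (0:ℝ) < jb3 (ξ - a) := lt_of_lt_of_le one_pos hJ1
        have h1 : t < (jb3 (ξ - a)) ^ (-(2+ε)) := by
          rw [show -(2+ε) = -(2:ℝ) - ε by ring]; exact ha1'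
        have hmono := Real.rpow_lt_rpow (le_of_lt ht0) h1
          (show (0:ℝ) < 1/(2+ε) by positivity)
        rw [← Real.rpow_mul (le_of_lt hJ0), show (-(2+ε)) * (1/(2+ε)) = -1 by field_simp,
          Real.rpow_neg_one] at hmono
        have h2 : jb3 (ξ - a) < r := by
          have h4 := (lt_inv_comm₀ (Real.rpow_pos_of_pos ht0 (1/(2+ε))) hJ0).mp hmono
          have h5 : r = (t ^ ((1:ℝ)/(2+ε)))⁻¹ := by
            rw [hrdef, ← Real.rpow_neg_one (t ^ ((1:ℝ)/(2+ε))), ← Real.rpow_mul (le_of_lt ht0)]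
            congr 1
            ring
          rw [h5]
          exact h4
        have h3 : ‖ξ - a‖ ≤ jb3 (ξ - a) := hjbnorm _
        rw [Metric.mem_closedBall, dist_comm, dist_eq_norm]
        linarith
      refine le_trans (measure_mono hsub2) (le_trans (annulus_ball_bound hT hrpos ξ) ?_)
      have hr2 : r^2 = t ^ (-β) := by
        rw [hrdef, ← Real.rpow_natCast (t ^ (-(1/(2+ε)))) 2, ← Real.rpow_mul (le_of_lt ht0)]
        congr 1
        rw [hβ]
        push_cast
        ring
      rw [hr2]
    · rw [Set.indicator_of_notMem (by
        simp only [Set.mem_Ioc, not_and, not_le]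
        intro _; exact ht1)]
      have hempty : {a : E3 | t < f a} = (∅ : Set E3) := by
        ext a
        simp only [Set.mem_setOf_eq, Set.mem_empty_iff_false, iff_false, not_lt]
        calc f a ≤ 1 := Real.rpow_le_one_of_one_le_of_nonpos (hjb1 _) (by linarith)
          _ ≤ t := ht1.le
      rw [hempty, Set.empty_inter, measure_empty]
  have hii : IntervalIntegrable (fun t : ℝ => t ^ (-β)) volume 0 1 :=
    intervalIntegral.intervalIntegrable_rpow' (by linarith)
  have hint : IntegrableOn (fun t : ℝ => 256 * t ^ (-β)) (Ioc (0:ℝ) 1) volume := by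
    have h := hii.const_mul (256:ℝ)
    rw [intervalIntegrable_iff, uIoc_of_le (by norm_num : (0:ℝ) ≤ 1)] at h
    exact h
  have hnn : 0 ≤ᵐ[volume.restrict (Ioc (0:ℝ) 1)] fun t : ℝ => 256 * t ^ (-β) := by
    rw [Filter.EventuallyLE, ae_restrict_iff' measurableSet_Ioc]
    refine Filter.Eventually.of_forall fun t ht => ?_
    have := Real.rpow_nonneg (le_of_lt ht.1) (-β)
    positivity
  have hval : (∫ t in Ioc (0:ℝ) 1, 256 * t ^ (-β)) = 256 * ((2+ε)/ε) := by
    rw [← intervalIntegral.integral_of_le (by norm_num : (0:ℝ) ≤ 1),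
      intervalIntegral.integral_const_mul,
      integral_rpow (Or.inl (by linarith : (-1:ℝ) < -β)),
      Real.one_rpow, Real.zero_rpow (by rw [hβ]; intro h; apply hε.ne'; field_simp at h; linarith)]
    have h1 : -β + 1 = ε/(2+ε) := by rw [hβ]; field_simp; ring
    rw [h1]
    field_simp
    norm_num
  calc ∫⁻ t in Ioi (0:ℝ), (volume.restrict {η : E3 | |‖η‖ - T| ≤ 1}) {a | t < f a}
      ≤ ∫⁻ t in Ioi (0:ℝ),
          (Ioc (0:ℝ) 1).indicator (fun t => ENNReal.ofReal (256 * t ^ (-β))) t :=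
        setLIntegral_mono' measurableSet_Ioi key
    _ = ∫⁻ t in Ioc (0:ℝ) 1, ENNReal.ofReal (256 * t ^ (-β)) := by
        rw [lintegral_indicator measurableSet_Ioc, Measure.restrict_restrict measurableSet_Ioc]
        congr 1
        rw [Set.inter_eq_self_of_subset_left Set.Ioc_subset_Ioi_self]
    _ = ENNReal.ofReal (∫ t in Ioc (0:ℝ) 1, 256 * t ^ (-β)) :=
        (ofReal_integral_eq_lintegral_ofReal hint hnn).symm
    _ ≤ ENNReal.ofReal (256 * ((2 + ε) / ε)) := by rw [hval]
end
end

section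
/- Suppose u : ℝ×ℝ³ → ℂ is a tempered distribution whose space-time Fourier transform û(τ,ξ) is supported in the region {||τ|−|ξ|| ≥ c|ξ|} for some c > 0. Then for any s ∈ ℝ, ‖u‖_{X^{s+1/4−ε, 1/2+ε}_{τ=0}} ≤ C ‖u‖_{X^{s, 3/4}_{|τ|=|ξ|}}, for 0 < ε ≤ 1/4, where C depends on c and ε. -/
open MeasureTheory
open scoped ENNReal

noncomputable section

/-- the Japanese bracket `⟨x⟩ = (1+|x|²)^{1/2}` -/
def jb (x : ℝ) : ℝ := Real.sqrt (1 + x ^ 2)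

/-- the `X^{s,b}_{|τ|=|ξ|}` norm of a space-time Fourier transform `F(τ,ξ)` -/
def Xwave (s b : ℝ) (F : ℝ × E3 → ℂ) : ℝ≥0∞ :=
  eLpNorm (fun p : ℝ × E3 => jb ‖p.2‖ ^ s * jb (|p.1| - ‖p.2‖) ^ b * ‖F p‖) 2 volume

/-- the `X^{s,b}_{τ=0}` norm of a space-time Fourier transform `F(τ,ξ)` -/
def Xzero (s b : ℝ) (F : ℝ × E3 → ℂ) : ℝ≥0∞ :=
  eLpNorm (fun p : ℝ × E3 => jb ‖p.2‖ ^ s * jb p.1 ^ b * ‖F p‖) 2 volume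

lemma jb_pos (x : ℝ) : 0 < jb x := Real.sqrt_pos.mpr (by positivity)

lemma jb_le_mul {a b M : ℝ} (hM : 1 ≤ M) (h : |a| ≤ M * |b|) : jb a ≤ M * jb b := by
  have ha : a ^ 2 = |a| ^ 2 := (sq_abs a).symm
  have hb : b ^ 2 = |b| ^ 2 := (sq_abs b).symm
  have h2 : a ^ 2 ≤ M ^ 2 * b ^ 2 := by
    rw [ha, hb]
    nlinarith [abs_nonneg a, abs_nonneg b]
  have hle : jb a ≤ Real.sqrt (M ^ 2 * (1 + b ^ 2)) := by
    apply Real.sqrt_le_sqrt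
    nlinarith
  calc jb a ≤ Real.sqrt (M ^ 2 * (1 + b ^ 2)) := hle
    _ = M * jb b := by
        rw [Real.sqrt_mul (by positivity), Real.sqrt_sq (by linarith)]
        rfl

/-- If the space-time Fourier transform of `u` is supported in
`{||τ|−|ξ|| ≥ c|ξ|}`, then `‖u‖_{X^{s+1/4−ε,1/2+ε}_{τ=0}} ≤ C‖u‖_{X^{s,3/4}_{|τ|=|ξ|}}`
for `0 < ε ≤ 1/4`. -/
theorem elliptic_region_transfer (c ε s : ℝ) (hc : 0 < c) (hε : 0 < ε)
    (hε' : ε ≤ 1 / 4) :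
    ∃ C : ℝ, 0 < C ∧ ∀ F : ℝ × E3 → ℂ,
      (∀ p : ℝ × E3, F p ≠ 0 → c * ‖p.2‖ ≤ |(|p.1| - ‖p.2‖)|) →
      Xzero (s + 1/4 - ε) (1/2 + ε) F ≤ ENNReal.ofReal C * Xwave s (3/4) F := by
  have hc' : 0 < 1 / c := one_div_pos.mpr hc
  set M : ℝ := max 1 (1 / c) with hMdef
  set M' : ℝ := 1 + 1 / c with hM'def
  have hM1 : 1 ≤ M := le_max_left _ _
  have hM0 : 0 < M := lt_of_lt_of_le one_pos hM1
  have hM'1 : 1 ≤ M' := by simp only [hM'def]; linarith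
  have hM'0 : 0 < M' := lt_of_lt_of_le one_pos hM'1
  have hcM : 1 / c ≤ M := le_max_right _ _
  have he1 : (0:ℝ) ≤ 1 / 4 - ε := by linarith
  have he2 : (0:ℝ) ≤ 1 / 2 + ε := by linarith
  set C : ℝ := M ^ ((1:ℝ)/4 - ε) * M' ^ ((1:ℝ)/2 + ε) with hCdef
  have hC0 : 0 < C := by positivity
  refine ⟨C, hC0, fun F hF => ?_⟩
  set g : ℝ × E3 → ℝ :=
    fun p => jb ‖p.2‖ ^ s * jb (|p.1| - ‖p.2‖) ^ ((3:ℝ)/4) * ‖F p‖ with hgdef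
  have hg0 : ∀ p, 0 ≤ g p := by
    intro p
    exact mul_nonneg (mul_nonneg (Real.rpow_nonneg (jb_pos _).le _)
      (Real.rpow_nonneg (jb_pos _).le _)) (norm_nonneg _)
  have key : ∀ p : ℝ × E3,
      jb ‖p.2‖ ^ (s + 1/4 - ε) * jb p.1 ^ (1/2 + ε) * ‖F p‖ ≤ C * g p := by
    intro p
    by_cases hFp : F p = 0
    · simp [hgdef, hFp]
    · have hsupp := hF p hFp
      set r : ℝ := ‖p.2‖ with hrdef
      set t : ℝ := p.1 with htdef
      set d : ℝ := |t| - r with hddef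
      have hr0 : 0 ≤ r := norm_nonneg _
      have hd0 : 0 ≤ |d| := abs_nonneg _
      have hrd : r ≤ (1 / c) * |d| := by
        rw [div_mul_eq_mul_div, le_div_iff₀ hc]
        linarith [hsupp]
      have h1 : jb r ≤ M * jb d := by
        apply jb_le_mul hM1
        rw [abs_of_nonneg hr0]
        calc r ≤ (1 / c) * |d| := hrd
          _ ≤ M * |d| := mul_le_mul_of_nonneg_right hcM hd0
      have h2 : jb t ≤ M' * jb d := by
        apply jb_le_mul hM'1
        have habs : |t| ≤ r + |d| := by
          have : d ≤ |d| := le_abs_self d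
          simp only [hddef] at this
          linarith
        calc |t| ≤ r + |d| := habs
          _ ≤ (1 / c) * |d| + |d| := by linarith
          _ = M' * |d| := by rw [hM'def]; ring
      have b1 : jb r ^ ((1:ℝ)/4 - ε) ≤ M ^ ((1:ℝ)/4 - ε) * jb d ^ ((1:ℝ)/4 - ε) := by
        rw [← Real.mul_rpow hM0.le (jb_pos d).le]
        exact Real.rpow_le_rpow (jb_pos r).le h1 he1
      have b2 : jb t ^ ((1:ℝ)/2 + ε) ≤ M' ^ ((1:ℝ)/2 + ε) * jb d ^ ((1:ℝ)/2 + ε) := by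
        rw [← Real.mul_rpow hM'0.le (jb_pos d).le]
        exact Real.rpow_le_rpow (jb_pos t).le h2 he2
      have hsplit : jb r ^ (s + 1/4 - ε) = jb r ^ s * jb r ^ ((1:ℝ)/4 - ε) := by
        rw [← Real.rpow_add (jb_pos r)]
        ring_nf
      have hdd : jb d ^ ((1:ℝ)/4 - ε) * jb d ^ ((1:ℝ)/2 + ε) = jb d ^ ((3:ℝ)/4) := by
        rw [← Real.rpow_add (jb_pos d)]
        ring_nf
      have hmid : jb r ^ ((1:ℝ)/4 - ε) * jb t ^ ((1:ℝ)/2 + ε) ≤ C * jb d ^ ((3:ℝ)/4) := by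
        calc jb r ^ ((1:ℝ)/4 - ε) * jb t ^ ((1:ℝ)/2 + ε)
            ≤ (M ^ ((1:ℝ)/4 - ε) * jb d ^ ((1:ℝ)/4 - ε)) *
              (M' ^ ((1:ℝ)/2 + ε) * jb d ^ ((1:ℝ)/2 + ε)) := by
              exact mul_le_mul b1 b2 (Real.rpow_nonneg (jb_pos t).le _)
                (mul_nonneg (Real.rpow_nonneg hM0.le _) (Real.rpow_nonneg (jb_pos d).le _))
          _ = C * (jb d ^ ((1:ℝ)/4 - ε) * jb d ^ ((1:ℝ)/2 + ε)) := by
              rw [hCdef]; ring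
          _ = C * jb d ^ ((3:ℝ)/4) := by rw [hdd]
      have hA : 0 ≤ jb r ^ s := Real.rpow_nonneg (jb_pos r).le _
      have hN : 0 ≤ ‖F p‖ := norm_nonneg _
      calc jb r ^ (s + 1/4 - ε) * jb t ^ (1/2 + ε) * ‖F p‖
          = jb r ^ s * (jb r ^ ((1:ℝ)/4 - ε) * jb t ^ ((1:ℝ)/2 + ε)) * ‖F p‖ := by
            rw [hsplit]; ring
        _ ≤ jb r ^ s * (C * jb d ^ ((3:ℝ)/4)) * ‖F p‖ := by
            apply mul_le_mul_of_nonneg_right _ hN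
            exact mul_le_mul_of_nonneg_left hmid hA
        _ = C * g p := by simp only [hgdef]; ring
  have hmono : Xzero (s + 1/4 - ε) (1/2 + ε) F ≤ eLpNorm (C • g) 2 volume := by
    apply eLpNorm_mono
    intro p
    rw [Real.norm_eq_abs, Pi.smul_apply, smul_eq_mul, Real.norm_eq_abs,
      abs_of_nonneg (mul_nonneg hC0.le (hg0 p)),
      abs_of_nonneg (mul_nonneg (mul_nonneg (Real.rpow_nonneg (jb_pos _).le _)
        (Real.rpow_nonneg (jb_pos _).le _)) (norm_nonneg _))]
    exact key p
  calc Xzero (s + 1/4 - ε) (1/2 + ε) F ≤ eLpNorm (C • g) 2 volume := hmono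
    _ = ↑‖C‖₊ * eLpNorm g 2 volume := eLpNorm_const_smul C g 2 volume
    _ = ENNReal.ofReal C * Xwave s (3/4) F := by
        rw [← enorm_eq_nnnorm, Real.enorm_eq_ofReal hC0.le]
        rfl
end
end
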